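/- Let ν be an entrywise nonnegative D×D real matrix with spectral radius ρ(ν) < 1, and let Λ and E be diagonal matrices with positive diagonal entries satisfying Λ_{ii}/E_{ii} ≤ 1 for every i. If (I − ν)^{-1} Λ [(I − ν)^{-1}]ᵀ = E, then ν is diagonal, and in fact ν = I − Λ^{1/2} E^{-1/2}. -/

import Mathlib

open Matrix Filter Topology

attribute [local instance] Matrix.linftyOpNormedRing Matrix.linftyOpNormedAlgebra

lemma aux_entry_pow_tendsto {D : ℕ} (hD : 0 < D) (M : Matrix (Fin D) (Fin D) ℂ)
    (hspec : ∀ μ ∈ spectrum ℂ M, ‖μ‖ < 1) (i j : Fin D) :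
    Tendsto (fun n : ℕ => (M ^ n) i j) atTop (𝓝 0) := by
  haveI : Nonempty (Fin D) := ⟨⟨0, hD⟩⟩
  haveI : CompleteSpace (Matrix (Fin D) (Fin D) ℂ) := FiniteDimensional.complete ℂ _
  have hρ : spectralRadius ℂ M < 1 := by
    have := spectrum.spectralRadius_lt_of_forall_lt M (r := 1)
      (fun z hz => by simpa [← NNReal.coe_lt_coe] using hspec z hz)
    simpa using this
  obtain ⟨r, hr1, hr2⟩ := ENNReal.lt_iff_exists_nnreal_btwn.mp hρ
  have hgel := spectrum.pow_nnnorm_pow_one_div_tendsto_nhds_spectralRadius M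
  have hev : ∀ᶠ n : ℕ in atTop, (‖M ^ n‖₊ : ENNReal) ^ (1 / (n:ℝ)) < r :=
    hgel.eventually_lt_const hr1
  have hev2 : ∀ᶠ n : ℕ in atTop, ‖M ^ n‖ ≤ (r : ℝ) ^ n := by
    filter_upwards [hev, eventually_ge_atTop 1] with n hn hn1
    have hn0 : (n : ℝ) ≠ 0 := Nat.cast_ne_zero.mpr (by omega)
    have := ENNReal.rpow_le_rpow hn.le (Nat.cast_nonneg n)
    rw [← ENNReal.rpow_mul, one_div, inv_mul_cancel₀ hn0, ENNReal.rpow_one,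
      ENNReal.rpow_natCast, ← ENNReal.coe_pow] at this
    have := ENNReal.coe_le_coe.mp this
    exact_mod_cast this
  have htend : Tendsto (fun n : ℕ => (r:ℝ) ^ n) atTop (𝓝 0) :=
    tendsto_pow_atTop_nhds_zero_of_lt_one r.coe_nonneg (by exact_mod_cast hr2)
  have hentry : ∀ᶠ n : ℕ in atTop, ‖(M ^ n) i j‖ ≤ (r : ℝ) ^ n := by
    filter_upwards [hev2] with n hn
    refine le_trans ?_ hn
    have : ‖(M ^ n) i j‖₊ ≤ ‖M ^ n‖₊ := by
      rw [Matrix.linfty_opNNNorm_def]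
      refine le_trans ?_ (Finset.le_sup (Finset.mem_univ i))
      exact Finset.single_le_sum (f := fun k => ‖(M ^ n) i k‖₊)
        (fun k _ => zero_le) (Finset.mem_univ j)
    exact_mod_cast this
  exact squeeze_zero_norm' hentry htend

/-- Let `ν` be an entrywise nonnegative `D × D` real matrix with spectral
radius `ρ(ν) < 1`, and let `Λ = diagonal l` and `E = diagonal e` be diagonal
matrices with positive diagonal entries satisfying `l i / e i ≤ 1` for every
`i`. If `(I − ν)⁻¹ Λ [(I − ν)⁻¹]ᵀ = E`, then `ν` is diagonal, and in fact
`ν = I − Λ^{1/2} E^{-1/2}`. -/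
theorem stmt_3 (D : ℕ) (ν : Matrix (Fin D) (Fin D) ℝ)
    (hnn : ∀ i j, 0 ≤ ν i j)
    (hspec : ∀ μ ∈ spectrum ℂ (ν.map (Complex.ofReal)), ‖μ‖ < 1)
    (l e : Fin D → ℝ) (hl : ∀ i, 0 < l i) (he : ∀ i, 0 < e i)
    (hle : ∀ i, l i / e i ≤ 1)
    (heq : (1 - ν)⁻¹ * Matrix.diagonal l * ((1 - ν)⁻¹)ᵀ = Matrix.diagonal e) :
    (∀ i j, i ≠ j → ν i j = 0) ∧
      ν = 1 - Matrix.diagonal (fun i => Real.sqrt (l i) / Real.sqrt (e i)) := by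
  classical
  rcases Nat.eq_zero_or_pos D with hD | hD
  · subst hD
    exact ⟨fun i => i.elim0, by ext i j; exact i.elim0⟩
  set M : Matrix (Fin D) (Fin D) ℂ := ν.map Complex.ofReal with hMdef
  have hmapM : M = Complex.ofRealHom.mapMatrix ν := rfl
  -- invertibility of 1 - ν
  have hdet : IsUnit (1 - ν).det := by
    by_contra hdet
    have h0 : (1 - ν).det = 0 := by simpa [isUnit_iff_ne_zero] using hdet
    have hdetC : ((1 : Matrix (Fin D) (Fin D) ℂ) - M).det = 0 := by
      have hmap : (1 : Matrix (Fin D) (Fin D) ℂ) - M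
          = Complex.ofRealHom.mapMatrix (1 - ν) := by
        rw [map_sub, _root_.map_one, ← hmapM]
      rw [hmap, ← RingHom.map_det, h0, map_zero]
    have h1 : (1 : ℂ) ∈ spectrum ℂ M := by
      rw [spectrum.mem_iff, _root_.map_one, Matrix.isUnit_iff_isUnit_det]
      simp [hdetC]
    have := hspec 1 h1
    norm_num at this
  set A : Matrix (Fin D) (Fin D) ℝ := (1 - ν)⁻¹ with hAdef
  have hA1 : (1 - ν) * A = 1 := Matrix.mul_nonsing_inv _ hdet
  have hA2 : A * (1 - ν) = 1 := Matrix.nonsing_inv_mul _ hdet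
  -- geometric partial sums
  have hgs : ∀ N : ℕ, (∑ n ∈ Finset.range N, ν ^ n) = A - ν ^ N * A := by
    intro N
    have h := geom_sum_mul ν N
    have h2 : (∑ n ∈ Finset.range N, ν ^ n) * (1 - ν) = 1 - ν ^ N := by
      rw [← neg_sub ν 1, mul_neg, h, neg_sub]
    calc (∑ n ∈ Finset.range N, ν ^ n)
        = (∑ n ∈ Finset.range N, ν ^ n) * ((1 - ν) * A) := by rw [hA1, mul_one]
      _ = ((∑ n ∈ Finset.range N, ν ^ n) * (1 - ν)) * A := by rw [Matrix.mul_assoc]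
      _ = (1 - ν ^ N) * A := by rw [h2]
      _ = A - ν ^ N * A := by rw [sub_mul, one_mul]
  -- nonnegativity of powers
  have hpow : ∀ (n : ℕ) i j, 0 ≤ (ν ^ n) i j := by
    intro n
    induction n with
    | zero => intro i j; rw [pow_zero, Matrix.one_apply]; split <;> norm_num
    | succ n ih =>
      intro i j
      rw [pow_succ, Matrix.mul_apply]
      exact Finset.sum_nonneg fun k _ => mul_nonneg (ih i k) (hnn k j)
  -- entrywise convergence of ν ^ n to 0
  have hnupow : ∀ i j, Tendsto (fun n : ℕ => (ν ^ n) i j) atTop (𝓝 0) := by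
    intro i j
    have h := aux_entry_pow_tendsto hD M hspec i j
    have hre : ∀ n : ℕ, (ν ^ n) i j = ((M ^ n) i j).re := by
      intro n
      have : M ^ n = (ν ^ n).map Complex.ofReal := by
        rw [hmapM, ← map_pow]; rfl
      rw [this]; simp [Matrix.map_apply]
    simp_rw [hre]
    have := (Complex.continuous_re.tendsto 0).comp h
    simpa [Function.comp_def] using this
  -- partial sums tend to A entrywise
  have hSA : ∀ i j, Tendsto (fun N : ℕ => (∑ n ∈ Finset.range N, ν ^ n) i j)
      atTop (𝓝 (A i j)) := by
    intro i j
    have h2 : Tendsto (fun N : ℕ => (ν ^ N * A) i j) atTop (𝓝 0) := by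
      have : Tendsto (fun N : ℕ => ∑ k, (ν ^ N) i k * A k j) atTop
          (𝓝 (∑ k : Fin D, 0 * A k j)) :=
        tendsto_finset_sum _ (fun k _ => (hnupow i k).mul_const _)
      simp_rw [Matrix.mul_apply]
      simpa using this
    have h3 : Tendsto (fun N : ℕ => A i j - (ν ^ N * A) i j) atTop (𝓝 (A i j - 0)) :=
      tendsto_const_nhds.sub h2
    simp_rw [hgs]
    simpa [Matrix.sub_apply] using h3
  -- A is entrywise nonnegative with diagonal entries ≥ 1
  have hAnn : ∀ i j, 0 ≤ A i j := by
    intro i j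
    refine ge_of_tendsto (hSA i j) (Filter.Eventually.of_forall fun N => ?_)
    rw [Matrix.sum_apply]
    exact Finset.sum_nonneg fun n _ => hpow n i j
  have hAdiag : ∀ i, 1 ≤ A i i := by
    intro i
    refine ge_of_tendsto (hSA i i) ?_
    filter_upwards [eventually_ge_atTop 1] with N hN
    rw [Matrix.sum_apply]
    have := Finset.single_le_sum (f := fun n => (ν ^ n) i i)
      (fun n _ => hpow n i i) (Finset.mem_range.mpr hN)
    simpa using this
  have hApos : ∀ i, 0 < A i i := fun i => lt_of_lt_of_le one_pos (hAdiag i)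
  -- the main equation, entrywise
  have hentry : ∀ i j, ∑ k, A i k * l k * A j k = Matrix.diagonal e i j := by
    intro i j
    rw [← heq]
    rw [Matrix.mul_apply]
    refine Finset.sum_congr rfl fun k _ => ?_
    rw [Matrix.mul_diagonal, Matrix.transpose_apply]
  -- off-diagonal entries of A vanish
  have hoff : ∀ i j, i ≠ j → A j i = 0 := by
    intro i j hij
    have h0 : ∑ k, A i k * l k * A j k = 0 := by
      have := hentry i j; rwa [Matrix.diagonal_apply_ne _ hij] at this
    have hterm : A i i * l i * A j i = 0 :=
      (Finset.sum_eq_zero_iff_of_nonneg (fun k _ =>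
        mul_nonneg (mul_nonneg (hAnn i k) (hl k).le) (hAnn j k))).mp h0 i (Finset.mem_univ i)
    have h1 : A i i * l i ≠ 0 := ne_of_gt (mul_pos (hApos i) (hl i))
    exact (mul_eq_zero.mp hterm).resolve_left h1
  -- diagonal equation
  have hd : ∀ i, A i i * l i * A i i = e i := by
    intro i
    have h0 := hentry i i
    rw [Matrix.diagonal_apply_eq] at h0
    rw [← h0]
    rw [Finset.sum_eq_single i (fun k _ hk => by rw [hoff k i hk]; ring) (by simp)]
  have hAne : ∀ i, A i i ≠ 0 := fun i => ne_of_gt (hApos i)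
  -- A is diagonal
  have hAdiagonal : A = Matrix.diagonal (fun i => A i i) := by
    ext i j
    by_cases h : i = j
    · subst h; rw [Matrix.diagonal_apply_eq]
    · rw [Matrix.diagonal_apply_ne _ h, hoff j i (Ne.symm h)]
  -- 1 - ν is the inverse diagonal
  have h3 : A * Matrix.diagonal (fun i => (A i i)⁻¹) = 1 := by
    nth_rewrite 1 [hAdiagonal]
    have hfun : (fun i => A i i * (A i i)⁻¹) = fun _ => (1:ℝ) :=
      funext fun i => mul_inv_cancel₀ (hAne i)
    rw [Matrix.diagonal_mul_diagonal, hfun, Matrix.diagonal_one]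
  have hkey : 1 - ν = Matrix.diagonal (fun i => (A i i)⁻¹) := by
    calc 1 - ν = (1 - ν) * (A * Matrix.diagonal (fun i => (A i i)⁻¹)) := by
          rw [h3, mul_one]
      _ = ((1 - ν) * A) * Matrix.diagonal (fun i => (A i i)⁻¹) := by rw [Matrix.mul_assoc]
      _ = Matrix.diagonal (fun i => (A i i)⁻¹) := by rw [hA1, one_mul]
  have hν : ν = 1 - Matrix.diagonal (fun i => (A i i)⁻¹) := by
    rw [← hkey]; exact (sub_sub_cancel 1 ν).symm
  have hsq : ∀ i, Real.sqrt (l i) / Real.sqrt (e i) = (A i i)⁻¹ := by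
    intro i
    have he' : e i = (A i i)^2 * l i := by rw [← hd i]; ring
    have hsl : Real.sqrt (l i) ≠ 0 := ne_of_gt (Real.sqrt_pos.mpr (hl i))
    rw [he', Real.sqrt_mul (sq_nonneg _), Real.sqrt_sq (hApos i).le,
      mul_comm, div_mul_eq_div_div, div_self hsl, one_div]
  constructor
  · intro i j hij
    rw [hν, Matrix.sub_apply, Matrix.one_apply_ne hij, Matrix.diagonal_apply_ne _ hij]
    ring
  · have hfun : (fun i => Real.sqrt (l i) / Real.sqrt (e i))
        = fun i => (A i i)⁻¹ := funext hsq
    rw [hν, hfun]
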